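/- For integers n ≥ 2, d ≥ 4, 0 ≤ k ≤ ⌈(1/(n+1))·C(n+d,n)⌉, and integers u, ε with 0 ≤ ε < n satisfying n·u + ε = k·(n+1) − C(n+d−1, n), one has n·ε + u ≤ C(n+d−2, n−1). -/
import Mathlib

lemma ceil_mul_lt (k : ℤ) (N q : ℕ) (hq : 0 < q)
    (hk : k ≤ ⌈(N : ℚ) / (q : ℚ)⌉) : k * (q : ℤ) < (N : ℤ) + q := by
  have hq' : (0 : ℚ) < (q : ℚ) := by exact_mod_cast hq
  have h1 : (k : ℚ) < (N : ℚ) / (q : ℚ) + 1 := by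
    have h2 : ((⌈(N : ℚ) / (q : ℚ)⌉ : ℤ) : ℚ) < (N : ℚ) / (q : ℚ) + 1 :=
      Int.ceil_lt_add_one _
    have h3 : (k : ℚ) ≤ ((⌈(N : ℚ) / (q : ℚ)⌉ : ℤ) : ℚ) := by exact_mod_cast hk
    linarith
  have h4 : (k : ℚ) * (q : ℚ) < (N : ℚ) + (q : ℚ) := by
    have h5 : ((N : ℚ) / (q : ℚ) + 1) * (q : ℚ) = (N : ℚ) + (q : ℚ) := by
      field_simp
    nlinarith [h1, hq']
  exact_mod_cast h4

lemma c4_eq (m : ℕ) : 24 * (m + 4).choose 4 = (m + 4) * (m + 3) * (m + 2) * (m + 1) := by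
  have h1 := Nat.descFactorial_eq_factorial_mul_choose (m + 4) 4
  rw [show Nat.factorial 4 = 24 from rfl] at h1
  rw [← h1]
  simp [Nat.descFactorial]
  ring

lemma keylem (m e : ℕ)
    (hgood : 3 ≤ m ∨ (m = 0 ∧ 2 ≤ e) ∨ (m = 1 ∧ 1 ≤ e) ∨ (m = 2 ∧ 1 ≤ e)) :
    (m + 2) ^ 3 + 1 ≤ (e + 3) * ((m + e + 4).choose m) + (m + 2) ^ 2 := by
  rcases hgood with hm | ⟨rfl, he⟩ | ⟨rfl, he⟩ | ⟨rfl, he⟩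
  · -- m ≥ 3
    have hmono : (m + 4).choose m ≤ (m + e + 4).choose m :=
      Nat.choose_le_choose m (by omega)
    have hsymm : (m + 4).choose m = (m + 4).choose 4 := by
      have h0 := Nat.choose_symm (show 4 ≤ m + 4 by omega)
      rwa [show m + 4 - 4 = m by omega] at h0
    have h24 := c4_eq m
    have hC : 24 * ((m + e + 4).choose m) ≥ (m + 4) * (m + 3) * (m + 2) * (m + 1) := by
      calc (m + 4) * (m + 3) * (m + 2) * (m + 1) = 24 * (m + 4).choose 4 := h24.symm
        _ = 24 * (m + 4).choose m := by rw [hsymm]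
        _ ≤ 24 * ((m + e + 4).choose m) := by
            exact Nat.mul_le_mul_left _ hmono
    have hE : 3 * ((m + e + 4).choose m) ≤ (e + 3) * ((m + e + 4).choose m) :=
      Nat.mul_le_mul_right _ (by omega)
    have hkey : 24 * ((m + 2) ^ 3 + 1) ≤ 24 * (3 * ((m + e + 4).choose m) + (m + 2) ^ 2) := by
      have : 24 * (3 * ((m + e + 4).choose m)) = 3 * (24 * ((m + e + 4).choose m)) := by ring
      nlinarith [hC, hm, sq_nonneg (m - 3)]
    have := Nat.le_of_mul_le_mul_left hkey (by norm_num)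
    omega
  · -- m = 0
    simp only [Nat.choose_zero_right]
    omega
  · -- m = 1
    have h1 : (1 + e + 4).choose 1 = e + 5 := by
      rw [Nat.choose_one_right]; omega
    rw [h1]
    nlinarith [he]
  · -- m = 2
    have h1 : (2 + e + 4).choose 2 * 2 = (2 + e + 4).choose 1 * (e + 5) := by
      have := Nat.choose_succ_right_eq (2 + e + 4) 1
      rwa [show 2 + e + 4 - 1 = e + 5 by omega] at this
    rw [Nat.choose_one_right] at h1
    nlinarith [he, h1]

/-- Lemma 6.3(i) of Brambilla–Ottaviani: the numerical lemma used in the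
Alexander–Hirschowitz induction. -/
theorem stmt_0 (n d : ℕ) (k u ε : ℤ) (hn : 2 ≤ n) (hd : 4 ≤ d)
    (hk0 : 0 ≤ k) (hk : k ≤ ⌈(((n + d).choose n : ℚ)) / ((n : ℚ) + 1)⌉)
    (hε0 : 0 ≤ ε) (hεn : ε < (n : ℤ))
    (h : (n : ℤ) * u + ε = k * ((n : ℤ) + 1) - ((n + d - 1).choose n : ℤ)) :
    (n : ℤ) * ε + u ≤ ((n + d - 2).choose (n - 1) : ℤ) := by
  obtain ⟨m, rfl⟩ := Nat.exists_eq_add_of_le hn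
  obtain ⟨e, rfl⟩ := Nat.exists_eq_add_of_le hd
  -- normalize the choose indices
  rw [show 2 + m + (4 + e) - 1 = m + e + 5 by omega] at h
  rw [show 2 + m + (4 + e) - 2 = m + e + 4 by omega, show 2 + m - 1 = m + 1 by omega]
  rw [show 2 + m + (4 + e) = m + e + 6 by omega] at hk
  -- bound on k * (n+1)
  have hk' : k ≤ ⌈(((m + e + 6).choose (m + 2) : ℕ) : ℚ) / (((m + 3 : ℕ)) : ℚ)⌉ := by
    rw [show 2 + m = m + 2 by omega] at hk
    convert hk using 3
    push_cast
    ring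
  have hkN : k * ((m + 3 : ℕ) : ℤ) < ((m + e + 6).choose (m + 2) : ℤ) + ((m + 3 : ℕ) : ℤ) :=
    ceil_mul_lt k _ _ (by omega) hk'
  push_cast at hkN
  -- Pascal identities
  have id1 : (m + e + 6).choose (m + 2)
      = (m + e + 5).choose (m + 1) + (m + e + 5).choose (m + 2) := by
    rw [show m + e + 6 = (m + e + 5) + 1 by omega, show m + 2 = (m + 1) + 1 by omega]
    exact Nat.choose_succ_succ _ _
  have id2 : (m + e + 5).choose (m + 1)
      = (m + e + 4).choose m + (m + e + 4).choose (m + 1) := by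
    rw [show m + e + 5 = (m + e + 4) + 1 by omega]
    exact Nat.choose_succ_succ _ _
  have id3 : (m + e + 4).choose (m + 1) * (m + 1) = (m + e + 4).choose m * (e + 4) := by
    have := Nat.choose_succ_right_eq (m + e + 4) m
    rwa [show m + e + 4 - m = e + 4 by omega] at this
  -- rewrite (n+d-1).choose n in h
  rw [show 2 + m = m + 2 by omega] at h
  by_cases hbad : (m = 0 ∧ e ≤ 1) ∨ (m = 1 ∧ e = 0) ∨ (m = 2 ∧ e = 0)
  · -- the four exceptional cases: concrete numbers, omega
    rcases hbad with ⟨rfl, he⟩ | ⟨rfl, rfl⟩ | ⟨rfl, rfl⟩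
    · interval_cases e <;>
        · norm_num [Nat.choose] at h hkN ⊢
          omega
    · norm_num [Nat.choose] at h hkN ⊢
      omega
    · norm_num [Nat.choose] at h hkN ⊢
      omega
  · -- the general case
    have hgood : 3 ≤ m ∨ (m = 0 ∧ 2 ≤ e) ∨ (m = 1 ∧ 1 ≤ e) ∨ (m = 2 ∧ 1 ≤ e) := by
      omega
    have key := keylem m e hgood
    -- move everything to ℤ
    set A : ℤ := ((m + e + 5).choose (m + 2) : ℤ) with hA
    set B : ℤ := ((m + e + 4).choose (m + 1) : ℤ) with hB
    set C : ℤ := ((m + e + 4).choose m : ℤ) with hC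
    set N : ℤ := ((m + e + 6).choose (m + 2) : ℤ) with hN
    have zid : N = A + B + C := by
      rw [hA, hB, hC, hN, id1, id2]; push_cast; ring
    have zid3 : B * ((m : ℤ) + 1) = C * ((e : ℤ) + 4) := by
      rw [hB, hC]; exact_mod_cast congrArg (Nat.cast : ℕ → ℤ) id3
    have zkey : ((m : ℤ) + 2) ^ 3 + 1 ≤ ((e : ℤ) + 3) * C + ((m : ℤ) + 2) ^ 2 := by
      rw [hC]; exact_mod_cast key
    push_cast at h hεn ⊢
    set x : ℤ := (m : ℤ) with hx
    have hx0 : (0 : ℤ) ≤ x := by rw [hx]; positivity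
    have hint1 : ((x + 2) ^ 2 - 1) * ((x + 1) - ε) ≥ 0 := by
      apply mul_nonneg
      · nlinarith [hx0]
      · linarith
    have hmul : (x + 2) * ((x + 2) * ε + u) ≤ (x + 2) * B := by
      nlinarith [hint1, h, hkN, zid, zid3, zkey, hεn, hε0, hx0]
    have hfin := le_of_mul_le_mul_left hmul (by linarith : (0 : ℤ) < x + 2)
    linarith
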